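/- Let G be a discrete group, N a normal subgroup, and A a G-graded *-algebra. Form the iterated crossed product C = A⋊G⋊G⋊(G/N), spanned by generators (a_r, s, t, uN), with operations induced by iterating the crossed-product construction: the first crossed product is by the grading, the second by the dual action δ̂_t(a_r,s) = (a_r, st⁻¹) together with the canonical grading of a crossed product by an action (degree of (x, t) is t), and the third is the restricted crossed product by the second dual action. Form also D = (A⋊(G/N))⋊G⋊G, using the decomposition grading on A⋊(G/N) (generator (a_s,tN) has degree s), its crossed product by G, the dual action, and the crossed product by G again. Then the map on generators (a_r, s, t, uN) ↦ (a_r, s t u N, s, t) extends to a *-algebra isomorphism C ≅ D. -/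

import Mathlib

/-!
Statement 3 (Proposition 3.2 of Kaliszewski–Quigg): for a discrete group `G`,
`N ⊴ G`, and a `G`-graded *-algebra `A`, the map on generators
`(a_r, s, t, uN) ↦ (a_r, s t uN, s, t)` extends to a *-algebra isomorphism
`A ⋊ G ⋊ G ⋊ (G/N) ≅ (A ⋊ (G/N)) ⋊ G ⋊ G`.

The iterated crossed product `A ⋊ G ⋊ G ⋊ (G/N)` is modelled on
`(G × G × G × G ⧸ N) →₀ A`, with generator `(a_r, s, t, uN)` at index
`(r, s, t, uN)`; iterating the crossed-product constructions on generators gives: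
  mul: `(a,r,s,t,uN)(b,r',s',t',u'N) = (ab, rr', s't⁻¹, tt', u'N)`
        if `s = r' s' t⁻¹` and `uN = t' u'N`, else `0`;
  star: `(a,r,s,t,uN)* = (a*, r⁻¹, rst, t⁻¹, t·uN)`.
Similarly `(A ⋊ (G/N)) ⋊ G ⋊ G` (decomposition grading on `A ⋊ (G/N)`, then the
crossed product by `G`, the dual action, and the crossed product by `G` again) is
modelled on `(G × (G ⧸ N) × G × G) →₀ A`, with
  mul: `(a,r,sN,t,w)(b,r',s'N,t',w') = (ab, rr', s'N, t'w⁻¹, ww')`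
        if `t = r' t' w⁻¹` and `sN = r'·s'N`, else `0`;
  star: `(a,r,sN,t,w)* = (a*, r⁻¹, r·sN, rtw, w⁻¹)`.
-/

attribute [local instance] Classical.propDecidable

noncomputable section

variable {G : Type*} [Group G] {A : Type*} [Ring A] [Algebra ℂ A] [StarRing A]
  [StarModule ℂ A] {N : Subgroup G} [N.Normal]

/-- `A` is a `G`-graded *-algebra with grading subspaces `𝒜 s`. -/
structure IsStarGrading (𝒜 : G → Submodule ℂ A) : Prop where
  one_mem : (1 : A) ∈ 𝒜 1
  mul_mem : ∀ ⦃s t : G⦄ ⦃a b : A⦄, a ∈ 𝒜 s → b ∈ 𝒜 t → a * b ∈ 𝒜 (s * t)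
  star_mem : ∀ ⦃s : G⦄ ⦃a : A⦄, a ∈ 𝒜 s → star a ∈ 𝒜 s⁻¹
  indep : iSupIndep 𝒜
  span_top : ⨆ s, 𝒜 s = ⊤

/-- Multiplication on `A ⋊ G ⋊ G ⋊ (G/N)`. -/
def c4Mul (f g : (G × G × G × G ⧸ N) →₀ A) : (G × G × G × G ⧸ N) →₀ A :=
  f.sum fun p a => g.sum fun q b =>
    if p.2.1 = q.1 * q.2.1 * p.2.2.1⁻¹ ∧ p.2.2.2 = (q.2.2.1 : G ⧸ N) * q.2.2.2 then
      Finsupp.single (p.1 * q.1, q.2.1 * p.2.2.1⁻¹, p.2.2.1 * q.2.2.1, q.2.2.2) (a * b)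
    else 0

/-- Involution on `A ⋊ G ⋊ G ⋊ (G/N)`. -/
def c4Star (f : (G × G × G × G ⧸ N) →₀ A) : (G × G × G × G ⧸ N) →₀ A :=
  f.sum fun p a =>
    Finsupp.single (p.1⁻¹, p.1 * p.2.1 * p.2.2.1, p.2.2.1⁻¹,
      (p.2.2.1 : G ⧸ N) * p.2.2.2) (star a)

/-- Multiplication on `(A ⋊ (G/N)) ⋊ G ⋊ G`. -/
def d4Mul (f g : (G × (G ⧸ N) × G × G) →₀ A) : (G × (G ⧸ N) × G × G) →₀ A :=
  f.sum fun p a => g.sum fun q b =>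
    if p.2.2.1 = q.1 * q.2.2.1 * p.2.2.2⁻¹ ∧ p.2.1 = (q.1 : G ⧸ N) * q.2.1 then
      Finsupp.single (p.1 * q.1, q.2.1, q.2.2.1 * p.2.2.2⁻¹, p.2.2.2 * q.2.2.2) (a * b)
    else 0

/-- Involution on `(A ⋊ (G/N)) ⋊ G ⋊ G`. -/
def d4Star (f : (G × (G ⧸ N) × G × G) →₀ A) : (G × (G ⧸ N) × G × G) →₀ A :=
  f.sum fun p a =>
    Finsupp.single (p.1⁻¹, (p.1 : G ⧸ N) * p.2.1, p.1 * p.2.2.1 * p.2.2.2,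
      p.2.2.2⁻¹) (star a)

/-- The map `(a_r, s, t, uN) ↦ (a_r, s t uN, s, t)` (linearly extended). -/
def moveGN (f : (G × G × G × G ⧸ N) →₀ A) : (G × (G ⧸ N) × G × G) →₀ A :=
  f.sum fun p a =>
    Finsupp.single (p.1, ((p.2.1 * p.2.2.1 : G) : G ⧸ N) * p.2.2.2,
      p.2.1, p.2.2.1) a

/-- The index bijection underlying `moveGN`. -/
def eIdx : (G × G × G × G ⧸ N) ≃ (G × (G ⧸ N) × G × G) where
  toFun p := (p.1, ((p.2.1 * p.2.2.1 : G) : G ⧸ N) * p.2.2.2, p.2.1, p.2.2.1)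
  invFun q := (q.1, q.2.2.1, q.2.2.2, (((q.2.2.1 * q.2.2.2 : G) : G ⧸ N))⁻¹ * q.2.1)
  left_inv p := by simp [mul_assoc]
  right_inv q := by simp [mul_assoc]

lemma moveGN_eq_mapDomain (f : (G × G × G × G ⧸ N) →₀ A) :
    moveGN f = Finsupp.mapDomain (eIdx (N := N)) f := rfl

lemma moveGN_single (p : G × G × G × G ⧸ N) (a : A) :
    moveGN (Finsupp.single p a) = Finsupp.single (eIdx p) a := by
  rw [moveGN_eq_mapDomain, Finsupp.mapDomain_single]

lemma moveGN_add (f g : (G × G × G × G ⧸ N) →₀ A) :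
    moveGN (f + g) = moveGN f + moveGN g := by
  simp [moveGN_eq_mapDomain, Finsupp.mapDomain_add]

lemma moveGN_zero : moveGN (0 : (G × G × G × G ⧸ N) →₀ A) = 0 := by
  simp [moveGN_eq_mapDomain]

lemma moveGN_smul (c : ℂ) (f : (G × G × G × G ⧸ N) →₀ A) :
    moveGN (c • f) = c • moveGN f := by
  simp [moveGN_eq_mapDomain, Finsupp.mapDomain_smul]

lemma moveGN_bijective :
    Function.Bijective (moveGN (G := G) (A := A) (N := N)) := by
  constructor
  · intro f g h
    rw [moveGN_eq_mapDomain, moveGN_eq_mapDomain] at h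
    exact Finsupp.mapDomain_injective (eIdx (N := N)).injective h
  · intro g
    refine ⟨Finsupp.mapDomain (eIdx (N := N)).symm g, ?_⟩
    rw [moveGN_eq_mapDomain, ← Finsupp.mapDomain_comp]
    simp

lemma c4Mul_single_single (p q : G × G × G × G ⧸ N) (a b : A) :
    c4Mul (Finsupp.single p a) (Finsupp.single q b) =
      if p.2.1 = q.1 * q.2.1 * p.2.2.1⁻¹ ∧ p.2.2.2 = (q.2.2.1 : G ⧸ N) * q.2.2.2 then
        Finsupp.single (p.1 * q.1, q.2.1 * p.2.2.1⁻¹, p.2.2.1 * q.2.2.1, q.2.2.2) (a * b)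
      else 0 := by
  unfold c4Mul
  rw [Finsupp.sum_single_index, Finsupp.sum_single_index]
  · simp
  · simp

lemma d4Mul_single_single (p q : G × (G ⧸ N) × G × G) (a b : A) :
    d4Mul (Finsupp.single p a) (Finsupp.single q b) =
      if p.2.2.1 = q.1 * q.2.2.1 * p.2.2.2⁻¹ ∧ p.2.1 = (q.1 : G ⧸ N) * q.2.1 then
        Finsupp.single (p.1 * q.1, q.2.1, q.2.2.1 * p.2.2.2⁻¹, p.2.2.2 * q.2.2.2) (a * b)
      else 0 := by
  unfold d4Mul
  rw [Finsupp.sum_single_index, Finsupp.sum_single_index]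
  · simp
  · simp

lemma c4Star_single (p : G × G × G × G ⧸ N) (a : A) :
    c4Star (Finsupp.single p a) =
      Finsupp.single (p.1⁻¹, p.1 * p.2.1 * p.2.2.1, p.2.2.1⁻¹,
        (p.2.2.1 : G ⧸ N) * p.2.2.2) (star a) := by
  unfold c4Star
  rw [Finsupp.sum_single_index]
  simp

lemma d4Star_single (p : G × (G ⧸ N) × G × G) (a : A) :
    d4Star (Finsupp.single p a) =
      Finsupp.single (p.1⁻¹, (p.1 : G ⧸ N) * p.2.1, p.1 * p.2.2.1 * p.2.2.2,
        p.2.2.2⁻¹) (star a) := by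
  unfold d4Star
  rw [Finsupp.sum_single_index]
  simp

lemma c4Mul_zero_left (g : (G × G × G × G ⧸ N) →₀ A) : c4Mul 0 g = 0 := by
  simp [c4Mul]

lemma c4Mul_zero_right (f : (G × G × G × G ⧸ N) →₀ A) : c4Mul f 0 = 0 := by
  simp [c4Mul]

lemma d4Mul_zero_left (g : (G × (G ⧸ N) × G × G) →₀ A) : d4Mul 0 g = 0 := by
  simp [d4Mul]

lemma d4Mul_zero_right (f : (G × (G ⧸ N) × G × G) →₀ A) : d4Mul f 0 = 0 := by
  simp [d4Mul]

lemma c4Mul_add_left (f f' g : (G × G × G × G ⧸ N) →₀ A) :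
    c4Mul (f + f') g = c4Mul f g + c4Mul f' g := by
  unfold c4Mul
  rw [Finsupp.sum_add_index]
  · intro p _
    simp
  · intro p _ a a'
    rw [← Finsupp.sum_add]
    apply Finsupp.sum_congr
    intro q _
    split <;> simp [add_mul, Finsupp.single_add]

lemma c4Mul_add_right (f g g' : (G × G × G × G ⧸ N) →₀ A) :
    c4Mul f (g + g') = c4Mul f g + c4Mul f g' := by
  unfold c4Mul
  rw [← Finsupp.sum_add]
  apply Finsupp.sum_congr
  intro p _
  rw [Finsupp.sum_add_index]
  · intro q _
    simp
  · intro q _ b b'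
    split <;> simp [mul_add, Finsupp.single_add]

lemma d4Mul_add_left (f f' g : (G × (G ⧸ N) × G × G) →₀ A) :
    d4Mul (f + f') g = d4Mul f g + d4Mul f' g := by
  unfold d4Mul
  rw [Finsupp.sum_add_index]
  · intro p _
    simp
  · intro p _ a a'
    rw [← Finsupp.sum_add]
    apply Finsupp.sum_congr
    intro q _
    split <;> simp [add_mul, Finsupp.single_add]

lemma d4Mul_add_right (f g g' : (G × (G ⧸ N) × G × G) →₀ A) :
    d4Mul f (g + g') = d4Mul f g + d4Mul f g' := by
  unfold d4Mul
  rw [← Finsupp.sum_add]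
  apply Finsupp.sum_congr
  intro p _
  rw [Finsupp.sum_add_index]
  · intro q _
    simp
  · intro q _ b b'
    split <;> simp [mul_add, Finsupp.single_add]

lemma c4Star_zero : c4Star (0 : (G × G × G × G ⧸ N) →₀ A) = 0 := by
  simp [c4Star]

lemma c4Star_add (f g : (G × G × G × G ⧸ N) →₀ A) :
    c4Star (f + g) = c4Star f + c4Star g := by
  unfold c4Star
  rw [Finsupp.sum_add_index] <;> simp

lemma d4Star_zero : d4Star (0 : (G × (G ⧸ N) × G × G) →₀ A) = 0 := by
  simp [d4Star]

lemma d4Star_add (f g : (G × (G ⧸ N) × G × G) →₀ A) :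
    d4Star (f + g) = d4Star f + d4Star g := by
  unfold d4Star
  rw [Finsupp.sum_add_index] <;> simp

lemma moveGN_mul_single_single (p q : G × G × G × G ⧸ N) (a b : A) :
    moveGN (c4Mul (Finsupp.single p a) (Finsupp.single q b)) =
      d4Mul (moveGN (Finsupp.single p a)) (moveGN (Finsupp.single q b)) := by
  obtain ⟨r, s, t, u⟩ := p
  obtain ⟨r', s', t', u'⟩ := q
  rw [c4Mul_single_single, moveGN_single, moveGN_single, d4Mul_single_single]
  simp only [eIdx, Equiv.coe_fn_mk]
  have hcond : (s = r' * s' * t⁻¹ ∧ u = (t' : G ⧸ N) * u') ↔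
      (s = r' * s' * t⁻¹ ∧
        ((s * t : G) : G ⧸ N) * u = (r' : G ⧸ N) * (((s' * t' : G) : G ⧸ N) * u')) := by
    constructor
    · rintro ⟨h1, h2⟩
      subst h1 h2
      refine ⟨rfl, ?_⟩
      rw [inv_mul_cancel_right]
      simp [QuotientGroup.mk_mul, mul_assoc]
    · rintro ⟨h1, h2⟩
      subst h1
      rw [inv_mul_cancel_right] at h2
      simp only [QuotientGroup.mk_mul, mul_assoc, mul_right_inj] at h2
      exact ⟨rfl, h2⟩
  split
  · rename_i h
    rw [moveGN_single]
    refine Eq.trans ?_ (if_pos (hcond.mp h)).symm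
    obtain ⟨h1, _⟩ := h
    subst h1
    simp only [eIdx, Equiv.coe_fn_mk]
    congr 1
    simp [Prod.ext_iff, QuotientGroup.mk_mul, QuotientGroup.mk_inv, mul_assoc]
  · rename_i h
    rw [moveGN_zero]
    exact (if_neg (fun h' => h (hcond.mpr h'))).symm

lemma moveGN_mul (f g : (G × G × G × G ⧸ N) →₀ A) :
    moveGN (c4Mul f g) = d4Mul (moveGN f) (moveGN g) := by
  induction f using Finsupp.induction_linear with
  | zero => rw [c4Mul_zero_left, moveGN_zero, d4Mul_zero_left]
  | add f f' hf hf' =>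
      rw [c4Mul_add_left, moveGN_add, moveGN_add, d4Mul_add_left, hf, hf']
  | single p a =>
      induction g using Finsupp.induction_linear with
      | zero => rw [c4Mul_zero_right, moveGN_zero, d4Mul_zero_right]
      | add g g' hg hg' =>
          rw [c4Mul_add_right, moveGN_add, moveGN_add, d4Mul_add_right, hg, hg']
      | single q b => exact moveGN_mul_single_single p q a b

lemma moveGN_star_single (p : G × G × G × G ⧸ N) (a : A) :
    moveGN (c4Star (Finsupp.single p a)) = d4Star (moveGN (Finsupp.single p a)) := by
  obtain ⟨r, s, t, u⟩ := p
  rw [c4Star_single, moveGN_single, moveGN_single, d4Star_single]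
  simp only [eIdx, Equiv.coe_fn_mk]
  congr 1
  simp [Prod.ext_iff, QuotientGroup.mk_mul, mul_assoc]

lemma moveGN_star (f : (G × G × G × G ⧸ N) →₀ A) :
    moveGN (c4Star f) = d4Star (moveGN f) := by
  induction f using Finsupp.induction_linear with
  | zero => rw [c4Star_zero, moveGN_zero, d4Star_zero]
  | add f f' hf hf' =>
      rw [c4Star_add, moveGN_add, moveGN_add, d4Star_add, hf, hf']
  | single p a => exact moveGN_star_single p a

theorem moveGN_is_star_algebra_isomorphism
    (𝒜 : G → Submodule ℂ A) (h𝒜 : IsStarGrading 𝒜) :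
    -- `moveGN` is the stated map on generators
    (∀ (r s t : G) (u : G ⧸ N) (a : A), a ∈ 𝒜 r →
      moveGN (Finsupp.single (r, s, t, u) a) =
        Finsupp.single (r, ((s * t : G) : G ⧸ N) * u, s, t) a) ∧
    -- it is a linear bijection
    Function.Bijective (moveGN (G := G) (A := A) (N := N)) ∧
    (∀ f g : (G × G × G × G ⧸ N) →₀ A, moveGN (f + g) = moveGN f + moveGN g) ∧
    (∀ (c : ℂ) (f : (G × G × G × G ⧸ N) →₀ A), moveGN (c • f) = c • moveGN f) ∧
    -- it is multiplicative and *-preserving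
    (∀ f g : (G × G × G × G ⧸ N) →₀ A,
      moveGN (c4Mul f g) = d4Mul (moveGN f) (moveGN g)) ∧
    (∀ f : (G × G × G × G ⧸ N) →₀ A, moveGN (c4Star f) = d4Star (moveGN f)) := by
  refine ⟨fun r s t u a _ => ?_, moveGN_bijective, moveGN_add, moveGN_smul,
    moveGN_mul, moveGN_star⟩
  rw [moveGN_single]
  rfl

end
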